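/- arXiv:2202.12192 — 4 statements merged into one kernel-verified Lean document; each statement's English description precedes it below -/
import Mathlib

section
/- Let α ∈ (0,1), T > 0, C > 0, and let u : [0,T] → L²(Ω) satisfy ‖∂_t u(t)‖ ≤ C t^{α-1} for t ∈ (0,T] (u continuously differentiable on (0,T]). Then for each t ∈ (0,T], ∫₀ᵗ ‖u(t) - u(τ)‖² / (t-τ)^{α+2} dτ ≤ C' t^{α-1} for some constant C' depending only on C and α. -/
open MeasureTheory Set
open scoped NNReal

private lemma rpow_subadd {a b p : ℝ} (ha : 0 ≤ a) (hb : 0 ≤ b) (hp : 0 ≤ p) (hp1 : p ≤ 1) :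
    (a + b) ^ p ≤ a ^ p + b ^ p := by
  have h := NNReal.rpow_add_le_add_rpow a.toNNReal b.toNNReal hp hp1
  have h' : (((a.toNNReal + b.toNNReal) ^ p : ℝ≥0) : ℝ)
      ≤ ((a.toNNReal ^ p + b.toNNReal ^ p : ℝ≥0) : ℝ) := NNReal.coe_le_coe.2 h
  rw [NNReal.coe_rpow, NNReal.coe_add, NNReal.coe_add, NNReal.coe_rpow, NNReal.coe_rpow,
    Real.coe_toNNReal a ha, Real.coe_toNNReal b hb] at h'
  exact h'

theorem singular_integral_bound
    {H : Type*} [NormedAddCommGroup H] [InnerProductSpace ℝ H] [CompleteSpace H]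
    (α T C : ℝ) (hα : α ∈ Set.Ioo (0:ℝ) 1) (hT : 0 < T) (hC : 0 < C)
    (u : ℝ → H)
    (hu : ∀ s ∈ Set.Ioc (0:ℝ) T, DifferentiableAt ℝ u s)
    (hbound : ∀ s ∈ Set.Ioc (0:ℝ) T, ‖deriv u s‖ ≤ C * s ^ (α - 1)) :
    ∃ C' : ℝ, 0 < C' ∧ ∀ t ∈ Set.Ioc (0:ℝ) T,
      ∫ τ in Set.Ioo (0:ℝ) t, ‖u t - u τ‖ ^ 2 / (t - τ) ^ (α + 2)
        ≤ C' * t ^ (α - 1) := by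
  obtain ⟨hα0, hα1⟩ := hα
  have h1α : 0 < 1 - α := by linarith
  -- The key pointwise estimates from the fundamental theorem of calculus
  have key : ∀ t ∈ Set.Ioc (0:ℝ) T, ∀ τ ∈ Set.Ioo (0:ℝ) t,
      ‖u t - u τ‖ ≤ (C / α) * (t ^ α - τ ^ α) ∧
      ‖u t - u τ‖ ≤ C * τ ^ (α - 1) * (t - τ) := by
    intro t ht τ hτ
    obtain ⟨ht0, htT⟩ := ht
    obtain ⟨hτ0, hτt⟩ := hτ
    have hsub : Icc τ t ⊆ Set.Ioc (0:ℝ) T := fun x hx =>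
      ⟨lt_of_lt_of_le hτ0 hx.1, le_trans hx.2 htT⟩
    have hd : ∀ x ∈ Icc τ t, HasDerivAt u (deriv u x) x := fun x hx =>
      (hu x (hsub hx)).hasDerivAt
    -- interval integrability of deriv u on [τ, t]
    have hdint : IntervalIntegrable (deriv u) volume τ t := by
      rw [intervalIntegrable_iff_integrableOn_Ioc_of_le hτt.le]
      apply Measure.integrableOn_of_bounded (M := C * τ ^ (α - 1))
        measure_Ioc_lt_top.ne (aestronglyMeasurable_deriv u _)
      filter_upwards [ae_restrict_mem measurableSet_Ioc] with x hx
      refine le_trans (hbound x (hsub ⟨hx.1.le, hx.2⟩)) ?_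
      have : x ^ (α - 1) ≤ τ ^ (α - 1) :=
        Real.rpow_le_rpow_of_nonpos hτ0 hx.1.le (by linarith)
      nlinarith [Real.rpow_nonneg hτ0.le (α - 1)]
    -- the bounding function is interval integrable
    have hgint : IntervalIntegrable (fun x => C * x ^ (α - 1)) volume τ t := by
      apply ContinuousOn.intervalIntegrable
      apply ContinuousOn.mul continuousOn_const
      intro x hx
      have hx0 : x ≠ 0 := by
        rw [uIcc_of_le hτt.le] at hx; exact (lt_of_lt_of_le hτ0 hx.1).ne'
      exact (Real.continuousAt_rpow_const x _ (Or.inl hx0)).continuousWithinAt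
    have heq : u t - u τ = ∫ x in τ..t, deriv u x :=
      (intervalIntegral.integral_eq_sub_of_hasDerivAt
        (fun x hx => hd x (by rwa [uIcc_of_le hτt.le] at hx)) hdint).symm
    have hpos : 0 ≤ ∫ x in τ..t, C * x ^ (α - 1) := by
      apply intervalIntegral.integral_nonneg hτt.le
      intro x hx
      have hx0 : (0:ℝ) < x := lt_of_lt_of_le hτ0 hx.1
      exact mul_nonneg hC.le (Real.rpow_nonneg hx0.le _)
    have hnorm : ‖u t - u τ‖ ≤ ∫ x in τ..t, C * x ^ (α - 1) := by
      rw [heq, ← abs_of_nonneg hpos]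
      refine intervalIntegral.norm_integral_le_abs_of_norm_le ?_ hgint
      filter_upwards [ae_restrict_mem measurableSet_uIoc] with x hx
      rw [uIoc_of_le hτt.le] at hx
      exact hbound x (hsub ⟨hx.1.le, hx.2⟩)
    have hval : (∫ x in τ..t, C * x ^ (α - 1)) = (C / α) * (t ^ α - τ ^ α) := by
      rw [intervalIntegral.integral_const_mul, integral_rpow]
      · rw [sub_add_cancel]
        ring
      · exact Or.inr ⟨by intro h; linarith, by
          rw [uIcc_of_le hτt.le]; intro h; exact absurd h.1 (by linarith)⟩
    constructor
    · rw [hval] at hnorm; exact hnorm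
    · refine le_trans hnorm ?_
      have hmono : (∫ x in τ..t, C * x ^ (α - 1)) ≤ ∫ _x in τ..t, C * τ ^ (α - 1) := by
        apply intervalIntegral.integral_mono_on hτt.le hgint intervalIntegrable_const
        intro x hx
        have : x ^ (α - 1) ≤ τ ^ (α - 1) :=
          Real.rpow_le_rpow_of_nonpos hτ0 hx.1 (by linarith)
        nlinarith
      have hconst : (∫ _x in τ..t, C * τ ^ (α - 1)) = (t - τ) * (C * τ ^ (α - 1)) := by
        rw [intervalIntegral.integral_const, smul_eq_mul]
      rw [hconst] at hmono
      linarith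
  -- the constant
  have hC'pos : 0 < (C / α) ^ 2 * 4 + C ^ 2 * (4 / (1 - α)) := by
    have h1 : 0 < C / α := div_pos hC hα0
    have h2 : 0 < 4 / (1 - α) := div_pos (by norm_num) h1α
    nlinarith
  refine ⟨(C / α) ^ 2 * 4 + C ^ 2 * (4 / (1 - α)), hC'pos, ?_⟩
  intro t ht
  obtain ⟨ht0, htT⟩ := ht
  have ht2 : 0 < t / 2 := by linarith
  -- the bounding function g
  set c₁ : ℝ := (C / α) ^ 2 * (t / 2) ^ (α - 2) with hc₁
  set c₂ : ℝ := C ^ 2 * (t / 2) ^ (2 * α - 2) with hc₂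
  have hc₁0 : 0 ≤ c₁ := by
    rw [hc₁]; exact mul_nonneg (by positivity) (Real.rpow_nonneg ht2.le _)
  have hc₂0 : 0 ≤ c₂ := by
    rw [hc₂]; exact mul_nonneg (by positivity) (Real.rpow_nonneg ht2.le _)
  set g : ℝ → ℝ := fun τ => c₁ + c₂ * (t - τ) ^ (-α) with hg
  -- integrability of g on Ioo 0 t
  have hrint : IntervalIntegrable (fun x : ℝ => x ^ (-α)) volume 0 t :=
    intervalIntegral.intervalIntegrable_rpow' (by linarith)
  have hrint' : IntervalIntegrable (fun x : ℝ => (t - x) ^ (-α)) volume 0 t := by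
    have := (hrint.comp_sub_left t)
    simpa using this.symm
  have hgint : IntervalIntegrable g volume 0 t :=
    intervalIntegrable_const.add (hrint'.const_mul c₂)
  have hgmeas : IntegrableOn g (Ioo 0 t) := by
    have := (intervalIntegrable_iff_integrableOn_Ioc_of_le ht0.le).mp hgint
    exact this.mono_set Ioo_subset_Ioc_self
  -- pointwise bound
  have hptwise : ∀ τ ∈ Ioo (0:ℝ) t, ‖u t - u τ‖ ^ 2 / (t - τ) ^ (α + 2) ≤ g τ := by
    intro τ hτ
    obtain ⟨hτ0, hτt⟩ := hτ
    have htτ : 0 < t - τ := by linarith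
    have hden : (0:ℝ) < (t - τ) ^ (α + 2) := Real.rpow_pos_of_pos htτ _
    obtain ⟨keyA, keyB⟩ := key t ⟨ht0, htT⟩ τ ⟨hτ0, hτt⟩
    rw [div_le_iff₀ hden]
    rcases le_or_gt τ (t / 2) with hhalf | hhalf
    · -- use keyA : ‖u t - u τ‖ ≤ (C/α) * (t^α - τ^α) ≤ (C/α) * (t-τ)^α
      have hsub : t ^ α - τ ^ α ≤ (t - τ) ^ α := by
        have := rpow_subadd (a := t - τ) (b := τ) htτ.le hτ0.le hα0.le hα1.le
        rw [sub_add_cancel] at this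
        linarith
      have h1 : ‖u t - u τ‖ ≤ (C / α) * (t - τ) ^ α := by
        refine le_trans keyA ?_
        have hCα : 0 ≤ C / α := by positivity
        exact mul_le_mul_of_nonneg_left hsub hCα
      have h2 : ‖u t - u τ‖ ^ 2 ≤ (C / α) ^ 2 * ((t - τ) ^ α) ^ 2 := by
        have hn : 0 ≤ ‖u t - u τ‖ := norm_nonneg _
        nlinarith [Real.rpow_nonneg htτ.le α]
      have h3 : ((t - τ) ^ α) ^ 2 = (t - τ) ^ (α - 2) * (t - τ) ^ (α + 2) := by
        rw [← Real.rpow_add htτ, ← Real.rpow_natCast ((t - τ) ^ α) 2,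
          ← Real.rpow_mul htτ.le]
        norm_num
        ring_nf
      have h4 : (t - τ) ^ (α - 2) ≤ (t / 2) ^ (α - 2) :=
        Real.rpow_le_rpow_of_nonpos ht2 (by linarith) (by linarith)
      have h5 : ‖u t - u τ‖ ^ 2 ≤ c₁ * (t - τ) ^ (α + 2) := by
        rw [h3] at h2
        calc ‖u t - u τ‖ ^ 2 ≤ (C / α) ^ 2 * ((t - τ) ^ (α - 2) * (t - τ) ^ (α + 2)) := h2
          _ ≤ (C / α) ^ 2 * ((t / 2) ^ (α - 2) * (t - τ) ^ (α + 2)) := by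
              apply mul_le_mul_of_nonneg_left _ (by positivity)
              exact mul_le_mul_of_nonneg_right h4 hden.le
          _ = c₁ * (t - τ) ^ (α + 2) := by rw [hc₁]; ring
      refine le_trans h5 ?_
      have hpos2 : 0 ≤ c₂ * (t - τ) ^ (-α) * (t - τ) ^ (α + 2) :=
        mul_nonneg (mul_nonneg hc₂0 (Real.rpow_nonneg htτ.le _)) hden.le
      have hexp : g τ * (t - τ) ^ (α + 2)
          = c₁ * (t - τ) ^ (α + 2) + c₂ * (t - τ) ^ (-α) * (t - τ) ^ (α + 2) := by
        simp only [hg]; ring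
      rw [hexp]; linarith
    · -- use keyB : ‖u t - u τ‖ ≤ C * τ^(α-1) * (t - τ)
      have h2 : ‖u t - u τ‖ ^ 2 ≤ C ^ 2 * (τ ^ (α - 1)) ^ 2 * (t - τ) ^ 2 := by
        have hn : 0 ≤ ‖u t - u τ‖ := norm_nonneg _
        nlinarith [Real.rpow_nonneg hτ0.le (α - 1), htτ.le,
          mul_nonneg (mul_nonneg hC.le (Real.rpow_nonneg hτ0.le (α - 1))) htτ.le]
      have h3 : (τ ^ (α - 1)) ^ 2 = τ ^ (2 * α - 2) := by
        rw [← Real.rpow_natCast (τ ^ (α - 1)) 2, ← Real.rpow_mul hτ0.le]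
        norm_num
        ring_nf
      have h4 : τ ^ (2 * α - 2) ≤ (t / 2) ^ (2 * α - 2) :=
        Real.rpow_le_rpow_of_nonpos ht2 hhalf.le (by linarith)
      have h5 : ((t - τ) : ℝ) ^ 2 = (t - τ) ^ (-α) * (t - τ) ^ (α + 2) := by
        rw [← Real.rpow_add htτ, ← Real.rpow_natCast (t - τ) 2]
        norm_num
      have h6 : ‖u t - u τ‖ ^ 2 ≤ c₂ * (t - τ) ^ (-α) * (t - τ) ^ (α + 2) := by
        calc ‖u t - u τ‖ ^ 2 ≤ C ^ 2 * (τ ^ (α - 1)) ^ 2 * (t - τ) ^ 2 := h2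
          _ ≤ C ^ 2 * (t / 2) ^ (2 * α - 2) * (t - τ) ^ 2 := by
              rw [h3]
              apply mul_le_mul_of_nonneg_right _ (by positivity)
              exact mul_le_mul_of_nonneg_left h4 (by positivity)
          _ = c₂ * (t - τ) ^ (-α) * (t - τ) ^ (α + 2) := by rw [hc₂, h5]; ring
      refine le_trans h6 ?_
      have hpos1 : 0 ≤ c₁ * (t - τ) ^ (α + 2) := mul_nonneg hc₁0 hden.le
      have hexp : g τ * (t - τ) ^ (α + 2)
          = c₁ * (t - τ) ^ (α + 2) + c₂ * (t - τ) ^ (-α) * (t - τ) ^ (α + 2) := by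
        simp only [hg]; ring
      rw [hexp]; linarith
  -- compare with the integral of g
  have hmono : (∫ τ in Ioo (0:ℝ) t, ‖u t - u τ‖ ^ 2 / (t - τ) ^ (α + 2))
      ≤ ∫ τ in Ioo (0:ℝ) t, g τ := by
    apply integral_mono_of_nonneg
    · filter_upwards [ae_restrict_mem measurableSet_Ioo] with τ hτ
      have htτ : 0 < t - τ := by linarith [hτ.2]
      positivity
    · exact hgmeas
    · filter_upwards [ae_restrict_mem measurableSet_Ioo] with τ hτ
      exact hptwise τ hτ
  refine le_trans hmono ?_
  -- compute the integral of g
  have hIoo : (∫ τ in Ioo (0:ℝ) t, g τ) = ∫ τ in (0:ℝ)..t, g τ := by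
    rw [intervalIntegral.integral_of_le ht0.le, integral_Ioc_eq_integral_Ioo]
  have hcomp : (∫ τ in (0:ℝ)..t, (t - τ) ^ (-α)) = t ^ (1 - α) / (1 - α) := by
    rw [intervalIntegral.integral_comp_sub_left (fun x : ℝ => x ^ (-α)) t]
    simp only [sub_self, sub_zero]
    rw [integral_rpow (Or.inl (by linarith : (-1:ℝ) < -α))]
    rw [Real.zero_rpow (by linarith : -α + 1 ≠ 0), sub_zero, neg_add_eq_sub]
  have hint_eq : (∫ τ in (0:ℝ)..t, g τ) = c₁ * t + c₂ * (t ^ (1 - α) / (1 - α)) := by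
    simp only [hg]
    rw [intervalIntegral.integral_add intervalIntegrable_const (hrint'.const_mul c₂),
      intervalIntegral.integral_const, intervalIntegral.integral_const_mul, hcomp]
    simp [mul_comm]
  rw [hIoo, hint_eq]
  -- final arithmetic: c₁ * t + c₂ * t^(1-α)/(1-α) ≤ C' * t^(α-1)
  have e1 : c₁ * t ≤ (C / α) ^ 2 * 4 * t ^ (α - 1) := by
    rw [hc₁]
    have hrw : (t / 2) ^ (α - 2) = t ^ (α - 2) * (2:ℝ) ^ (2 - α) := by
      rw [Real.div_rpow ht0.le (by norm_num), div_eq_mul_inv,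
        ← Real.rpow_neg (by norm_num : (0:ℝ) ≤ 2), neg_sub]
    rw [hrw]
    have h24 : (2:ℝ) ^ (2 - α) ≤ 4 := by
      calc (2:ℝ) ^ (2 - α) ≤ (2:ℝ) ^ (2:ℝ) :=
            Real.rpow_le_rpow_of_exponent_le one_le_two (by linarith)
        _ = 4 := by
            rw [Real.rpow_two]; norm_num
    have htt : t ^ (α - 2) * t = t ^ (α - 1) := by
      nth_rewrite 2 [← Real.rpow_one t]
      rw [← Real.rpow_add ht0]; ring_nf
    calc (C / α) ^ 2 * (t ^ (α - 2) * (2:ℝ) ^ (2 - α)) * t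
        = (C / α) ^ 2 * (2:ℝ) ^ (2 - α) * (t ^ (α - 2) * t) := by ring
      _ = (C / α) ^ 2 * (2:ℝ) ^ (2 - α) * t ^ (α - 1) := by rw [htt]
      _ ≤ (C / α) ^ 2 * 4 * t ^ (α - 1) := by
          apply mul_le_mul_of_nonneg_right _ (Real.rpow_nonneg ht0.le _)
          apply mul_le_mul_of_nonneg_left h24 (by positivity)
  have e2 : c₂ * (t ^ (1 - α) / (1 - α)) ≤ C ^ 2 * (4 / (1 - α)) * t ^ (α - 1) := by
    rw [hc₂]
    have hrw : (t / 2) ^ (2 * α - 2) = t ^ (2 * α - 2) * (2:ℝ) ^ (2 - 2 * α) := by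
      rw [Real.div_rpow ht0.le (by norm_num), div_eq_mul_inv,
        ← Real.rpow_neg (by norm_num : (0:ℝ) ≤ 2), neg_sub]
    rw [hrw]
    have h24 : (2:ℝ) ^ (2 - 2 * α) ≤ 4 := by
      calc (2:ℝ) ^ (2 - 2 * α) ≤ (2:ℝ) ^ (2:ℝ) :=
            Real.rpow_le_rpow_of_exponent_le one_le_two (by linarith)
        _ = 4 := by
            rw [Real.rpow_two]; norm_num
    have htt : t ^ (2 * α - 2) * t ^ (1 - α) = t ^ (α - 1) := by
      rw [← Real.rpow_add ht0]; ring_nf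
    calc C ^ 2 * (t ^ (2 * α - 2) * (2:ℝ) ^ (2 - 2 * α)) * (t ^ (1 - α) / (1 - α))
        = C ^ 2 * (2:ℝ) ^ (2 - 2 * α) / (1 - α) * (t ^ (2 * α - 2) * t ^ (1 - α)) := by ring
      _ = C ^ 2 * (2:ℝ) ^ (2 - 2 * α) / (1 - α) * t ^ (α - 1) := by rw [htt]
      _ ≤ C ^ 2 * (4 / (1 - α)) * t ^ (α - 1) := by
          apply mul_le_mul_of_nonneg_right _ (Real.rpow_nonneg ht0.le _)
          rw [show C ^ 2 * (4 / (1 - α)) = C ^ 2 * 4 / (1 - α) from by ring]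
          exact (div_le_div_iff_of_pos_right h1α).mpr (mul_le_mul_of_nonneg_left h24 (by positivity))
  calc c₁ * t + c₂ * (t ^ (1 - α) / (1 - α))
      ≤ (C / α) ^ 2 * 4 * t ^ (α - 1) + C ^ 2 * (4 / (1 - α)) * t ^ (α - 1) := add_le_add e1 e2
    _ = ((C / α) ^ 2 * 4 + C ^ 2 * (4 / (1 - α))) * t ^ (α - 1) := by ring
end

section
/- Let H be a Hilbert space, α ∈ (0,1), and v : [0,∞) → H continuous with: (i) ‖v(t)‖ ≤ M for all t; (ii) ‖v(t) - v(τ)‖ ≤ C|t-τ|^α for all t,τ ≥ 0; (iii) v(t) → v_∞ in H as t → ∞ for some v_∞ ∈ H. Then ∫₀ᵗ ‖v(t) - v(τ)‖² / (t-τ)^{α+1} dτ → 0 as t → ∞. -/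
open MeasureTheory Filter

lemma integral_sub_rpow_aux (t a b r : ℝ)
    (h : -1 < r ∨ r ≠ -1 ∧ (0 : ℝ) ∉ Set.uIcc (t - b) (t - a)) :
    ∫ τ in a..b, (t - τ) ^ r = ((t - a) ^ (r + 1) - (t - b) ^ (r + 1)) / (r + 1) := by
  rw [intervalIntegral.integral_comp_sub_left (fun x => x ^ r) t, integral_rpow h]

set_option maxHeartbeats 2000000 in
theorem memory_term_tendsto_zero
    {H : Type*} [NormedAddCommGroup H] [InnerProductSpace ℝ H] [CompleteSpace H]
    (α M C : ℝ) (hα : α ∈ Set.Ioo (0:ℝ) 1) (hM : 0 < M) (hC : 0 < C)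
    (v : ℝ → H) (v_inf : H)
    (hcont : ContinuousOn v (Set.Ici 0))
    (hbdd : ∀ t : ℝ, 0 ≤ t → ‖v t‖ ≤ M)
    (hHolder : ∀ t τ : ℝ, 0 ≤ t → 0 ≤ τ → ‖v t - v τ‖ ≤ C * |t - τ| ^ α)
    (hlim : Tendsto v atTop (nhds v_inf)) :
    Tendsto (fun t : ℝ => ∫ τ in Set.Ioo (0:ℝ) t,
      ‖v t - v τ‖ ^ 2 / (t - τ) ^ (α + 1)) atTop (nhds 0) := by
  obtain ⟨hα0, hα1⟩ := hα
  rw [Metric.tendsto_atTop]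
  intro ε hε
  -- choose constants
  set δ : ℝ := (ε * α / (4 * C ^ 2)) ^ α⁻¹ with hδdef
  have hδpos : 0 < δ := Real.rpow_pos_of_pos (by positivity) _
  have hδα : δ ^ α = ε * α / (4 * C ^ 2) :=
    Real.rpow_inv_rpow (by positivity) hα0.ne'
  have hδαpos : 0 < δ ^ α := Real.rpow_pos_of_pos hδpos _
  set εv : ℝ := Real.sqrt (ε * α * δ ^ α / 16) with hεvdef
  have hεvpos : 0 < εv := Real.sqrt_pos.mpr (by positivity)
  have hεv2 : εv ^ 2 = ε * α * δ ^ α / 16 := Real.sq_sqrt (by positivity)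
  obtain ⟨A₀, hA₀⟩ := Metric.tendsto_atTop.mp hlim εv hεvpos
  set A : ℝ := max A₀ 1 with hAdef
  have hA1 : (1:ℝ) ≤ A := le_max_right _ _
  have hApos : (0:ℝ) < A := by linarith
  have hAclose : ∀ s : ℝ, A ≤ s → ‖v s - v_inf‖ < εv := by
    intro s hs
    have := hA₀ s (le_trans (le_max_left _ _) hs)
    rwa [dist_eq_norm] at this
  set Q : ℝ := (16 * M ^ 2 * A / ε) ^ (α + 1)⁻¹ with hQdef
  have hQpos : 0 < Q := Real.rpow_pos_of_pos (by positivity) _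
  refine ⟨A + δ + Q, fun t ht => ?_⟩
  have htA : A + δ + Q ≤ t := ht
  have ht0 : 0 < t := by linarith
  have hAt : A < t := by linarith
  have hAtδ : A ≤ t - δ := by linarith
  have htδt : t - δ < t := by linarith
  have hQt : Q ≤ t - A := by linarith
  have htA1 : 16 * M ^ 2 * A / ε ≤ (t - A) ^ (α + 1) := by
    calc 16 * M ^ 2 * A / ε = Q ^ (α + 1) :=
          (Real.rpow_inv_rpow (by positivity) (by positivity)).symm
      _ ≤ (t - A) ^ (α + 1) := Real.rpow_le_rpow hQpos.le hQt (by positivity)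
  -- the integrand and pointwise domination on (0,t)
  set f : ℝ → ℝ := fun τ => ‖v t - v τ‖ ^ 2 / (t - τ) ^ (α + 1) with hfdef
  have hf_le : ∀ τ ∈ Set.Ioo (0:ℝ) t, f τ ≤ C ^ 2 * (t - τ) ^ (α - 1) := by
    intro τ hτ
    have hτt : 0 < t - τ := by linarith [hτ.2]
    have hd : (0:ℝ) < (t - τ) ^ (α + 1) := Real.rpow_pos_of_pos hτt _
    have h1 : ‖v t - v τ‖ ≤ C * (t - τ) ^ α := by
      have := hHolder t τ ht0.le hτ.1.le
      rwa [abs_of_pos hτt] at this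
    have h2 : ‖v t - v τ‖ ^ 2 ≤ C ^ 2 * ((t - τ) ^ α) ^ 2 := by
      rw [← mul_pow]; exact pow_le_pow_left₀ (norm_nonneg _) h1 2
    calc f τ = ‖v t - v τ‖ ^ 2 * ((t - τ) ^ (α + 1))⁻¹ := div_eq_mul_inv _ _
      _ ≤ (C ^ 2 * ((t - τ) ^ α) ^ 2) * ((t - τ) ^ (α + 1))⁻¹ :=
          mul_le_mul_of_nonneg_right h2 (inv_nonneg.mpr hd.le)
      _ = C ^ 2 * (((t - τ) ^ α) ^ 2 / (t - τ) ^ (α + 1)) := by ring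
      _ = C ^ 2 * (t - τ) ^ (α - 1) := by
          have h3 : ((t - τ) ^ α) ^ 2 / (t - τ) ^ (α + 1) = (t - τ) ^ (α - 1) := by
            rw [sq ((t - τ) ^ α), ← Real.rpow_add hτt, ← Real.rpow_sub hτt]
            congr 1; ring
          rw [h3]
  have hvcont : ContinuousOn v (Set.Ioo (0:ℝ) t) :=
    hcont.mono (fun x hx => le_of_lt hx.1)
  have hmeas : AEStronglyMeasurable f (volume.restrict (Set.Ioo 0 t)) := by
    apply ContinuousOn.aestronglyMeasurable _ measurableSet_Ioo
    apply ContinuousOn.div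
    · exact ((continuousOn_const.sub hvcont).norm).pow 2
    · exact (continuousOn_const.sub continuousOn_id).rpow_const
        (fun x hx => Or.inl (sub_ne_zero.mpr (ne_of_lt hx.2).symm))
    · exact fun x hx => (Real.rpow_pos_of_pos (by linarith [hx.2] : (0:ℝ) < t - x) _).ne'
  have hg3 : IntegrableOn (fun τ => C ^ 2 * (t - τ) ^ (α - 1)) (Set.Ioo 0 t) := by
    have h1 : IntervalIntegrable (fun τ => (t - τ) ^ (α - 1)) volume 0 t := by
      have h := (intervalIntegral.intervalIntegrable_rpow' (a := t) (b := 0)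
        (by linarith : (-1:ℝ) < α - 1)).comp_sub_left t
      simpa using h
    exact (intervalIntegrable_iff_integrableOn_Ioo_of_le ht0.le).mp (h1.const_mul (C ^ 2))
  have hfint : IntegrableOn f (Set.Ioo 0 t) := by
    apply Integrable.mono hg3 hmeas
    filter_upwards [ae_restrict_mem measurableSet_Ioo] with τ hτ
    have hτt : 0 < t - τ := by linarith [hτ.2]
    rw [Real.norm_of_nonneg (div_nonneg (by positivity) (Real.rpow_pos_of_pos hτt _).le),
      Real.norm_of_nonneg (by positivity)]
    exact hf_le τ hτ
  -- subsets and disjointness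
  have hsub1 : Set.Ioc (0:ℝ) A ⊆ Set.Ioo 0 t := fun x hx => ⟨hx.1, lt_of_le_of_lt hx.2 hAt⟩
  have hsub2 : Set.Ioc A (t - δ) ⊆ Set.Ioo 0 t :=
    fun x hx => ⟨hApos.trans hx.1, lt_of_le_of_lt hx.2 htδt⟩
  have hsub3 : Set.Ioo (t - δ) t ⊆ Set.Ioo 0 t :=
    fun x hx => ⟨lt_of_le_of_lt (by linarith : (0:ℝ) ≤ t - δ) hx.1, hx.2⟩
  have hsplit : Set.Ioo (0:ℝ) t = Set.Ioc 0 A ∪ (Set.Ioc A (t - δ) ∪ Set.Ioo (t - δ) t) := by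
    rw [Set.Ioc_union_Ioo_eq_Ioo hAtδ htδt, Set.Ioc_union_Ioo_eq_Ioo hApos.le hAt]
  have hdisj1 : Disjoint (Set.Ioc (0:ℝ) A) (Set.Ioc A (t - δ) ∪ Set.Ioo (t - δ) t) := by
    rw [Set.disjoint_left]
    rintro x hx (h2 | h3)
    · exact absurd hx.2 (not_le.mpr h2.1)
    · exact absurd hx.2 (not_le.mpr (lt_of_le_of_lt hAtδ h3.1))
  have hdisj2 : Disjoint (Set.Ioc A (t - δ)) (Set.Ioo (t - δ) t) := by
    rw [Set.disjoint_left]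
    rintro x hx h3
    exact absurd hx.2 (not_le.mpr h3.1)
  have hIeq : ∫ τ in Set.Ioo (0:ℝ) t, f τ = (∫ τ in Set.Ioc (0:ℝ) A, f τ)
      + ((∫ τ in Set.Ioc A (t - δ), f τ) + ∫ τ in Set.Ioo (t - δ) t, f τ) := by
    rw [hsplit, setIntegral_union hdisj1 (measurableSet_Ioc.union measurableSet_Ioo)
        (hfint.mono_set hsub1) (hfint.mono_set (Set.union_subset hsub2 hsub3)),
      setIntegral_union hdisj2 measurableSet_Ioo (hfint.mono_set hsub2) (hfint.mono_set hsub3)]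
  -- Bound 1 : far past
  have hB1 : ∫ τ in Set.Ioc (0:ℝ) A, f τ ≤ ε / 4 := by
    have hdenA : (0:ℝ) < (t - A) ^ (α + 1) := Real.rpow_pos_of_pos (by linarith) _
    have hle : ∀ τ ∈ Set.Ioc (0:ℝ) A, f τ ≤ 4 * M ^ 2 / (t - A) ^ (α + 1) := by
      intro τ hτ
      have hτt : 0 < t - τ := by linarith [hτ.2]
      have hnum : ‖v t - v τ‖ ^ 2 ≤ 4 * M ^ 2 := by
        have h := norm_sub_le (v t) (v τ)
        have h1 := hbdd t ht0.le
        have h2 := hbdd τ hτ.1.le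
        nlinarith [norm_nonneg (v t - v τ)]
      have hden : (t - A) ^ (α + 1) ≤ (t - τ) ^ (α + 1) :=
        Real.rpow_le_rpow (by linarith) (by linarith [hτ.2]) (by linarith)
      exact div_le_div₀ (by positivity) hnum hdenA hden
    calc ∫ τ in Set.Ioc (0:ℝ) A, f τ
        ≤ ∫ _ in Set.Ioc (0:ℝ) A, 4 * M ^ 2 / (t - A) ^ (α + 1) :=
          setIntegral_mono_on (hfint.mono_set hsub1)
            (integrableOn_const measure_Ioc_lt_top.ne) measurableSet_Ioc hle
      _ = A * (4 * M ^ 2 / (t - A) ^ (α + 1)) := by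
          rw [setIntegral_const, Real.volume_real_Ioc, smul_eq_mul,
            max_eq_left (by linarith : (0:ℝ) ≤ A - 0), sub_zero]
      _ ≤ A * (ε / (4 * A)) := by
          apply mul_le_mul_of_nonneg_left _ hApos.le
          rw [div_le_div_iff₀ hdenA (by positivity)]
          have h16 : 16 * M ^ 2 * A ≤ (t - A) ^ (α + 1) * ε := (div_le_iff₀ hε).mp htA1
          nlinarith [h16]
      _ = ε / 4 := by
          field_simp
  -- Bound 3 : near the singularity
  have hB3 : ∫ τ in Set.Ioo (t - δ) t, f τ ≤ ε / 4 := by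
    calc ∫ τ in Set.Ioo (t - δ) t, f τ
        ≤ ∫ τ in Set.Ioo (t - δ) t, C ^ 2 * (t - τ) ^ (α - 1) :=
          setIntegral_mono_on (hfint.mono_set hsub3) (hg3.mono_set hsub3) measurableSet_Ioo
            (fun τ hτ => hf_le τ (hsub3 hτ))
      _ = ∫ τ in (t - δ)..t, C ^ 2 * (t - τ) ^ (α - 1) := by
          rw [intervalIntegral.integral_of_le htδt.le, integral_Ioc_eq_integral_Ioo]
      _ = C ^ 2 * (δ ^ α / α) := by
          rw [intervalIntegral.integral_const_mul,
            integral_sub_rpow_aux t (t - δ) t (α - 1) (Or.inl (by linarith)),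
            show t - (t - δ) = δ by ring, sub_self, show α - 1 + 1 = α by ring,
            Real.zero_rpow hα0.ne']
          ring
      _ = ε / 4 := by
          rw [hδα]
          field_simp
  -- Bound 2 : middle range
  have hB2 : ∫ τ in Set.Ioc A (t - δ), f τ ≤ ε / 4 := by
    set g2 : ℝ → ℝ := fun τ => (2 * εv) ^ 2 * (t - τ) ^ (-(α + 1)) with hg2def
    have hle2 : ∀ τ ∈ Set.Ioc A (t - δ), f τ ≤ g2 τ := by
      intro τ hτ
      have hτt : 0 < t - τ := by linarith [hτ.2]
      have hnum : ‖v t - v τ‖ ≤ 2 * εv := by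
        calc ‖v t - v τ‖ ≤ ‖v t - v_inf‖ + ‖v_inf - v τ‖ :=
              norm_sub_le_norm_sub_add_norm_sub _ _ _
          _ ≤ εv + εv := add_le_add (hAclose t (by linarith)).le
              (by rw [norm_sub_rev]; exact (hAclose τ hτ.1.le).le)
          _ = 2 * εv := by ring
      have hfeq : f τ = ‖v t - v τ‖ ^ 2 * (t - τ) ^ (-(α + 1)) := by
        rw [Real.rpow_neg hτt.le]
        exact div_eq_mul_inv _ _
      rw [hfeq]
      exact mul_le_mul_of_nonneg_right
        (pow_le_pow_left₀ (norm_nonneg _) hnum 2) (Real.rpow_nonneg hτt.le _)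
    have hint2 : IntegrableOn g2 (Set.Ioc A (t - δ)) := by
      apply (ContinuousOn.integrableOn_Icc ?_).mono_set Set.Ioc_subset_Icc_self
      apply ContinuousOn.mul continuousOn_const
      apply (continuousOn_const.sub continuousOn_id).rpow_const
      intro x hx
      exact Or.inl (sub_ne_zero.mpr (by simp only [id_eq]; intro h; rw [← h] at hx; linarith [hx.2]))
    have hcomp : ∫ τ in A..(t - δ), (t - τ) ^ (-(α + 1))
        = (δ ^ (-α) - (t - A) ^ (-α)) / α := by
      rw [integral_sub_rpow_aux t A (t - δ) (-(α + 1)) (Or.inr ⟨by intro h; apply hα0.ne'; linarith [neg_eq_iff_eq_neg.mp h], by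
        intro h0
        rw [Set.mem_uIcc] at h0
        rcases h0 with ⟨h1, _⟩ | ⟨_, h2⟩
        · linarith
        · linarith⟩),
        show t - (t - δ) = δ by ring, show -(α + 1) + 1 = -α by ring]
      ring
    calc ∫ τ in Set.Ioc A (t - δ), f τ ≤ ∫ τ in Set.Ioc A (t - δ), g2 τ :=
          setIntegral_mono_on (hfint.mono_set hsub2) hint2 measurableSet_Ioc hle2
      _ = ∫ τ in A..(t - δ), g2 τ := (intervalIntegral.integral_of_le hAtδ).symm
      _ = (2 * εv) ^ 2 * ((δ ^ (-α) - (t - A) ^ (-α)) / α) := by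
          rw [hg2def, intervalIntegral.integral_const_mul, hcomp]
      _ ≤ (2 * εv) ^ 2 * (δ ^ (-α) / α) := by
          apply mul_le_mul_of_nonneg_left _ (by positivity)
          rw [div_le_div_iff_of_pos_right hα0]
          have hb : (0:ℝ) ≤ (t - A) ^ (-α) := Real.rpow_nonneg (by linarith) _
          linarith
      _ = ε / 4 := by
          have hone : δ ^ α * δ ^ (-α) = 1 := by
            rw [← Real.rpow_add hδpos]
            simp
          have h2εv : (2 * εv) ^ 2 = ε * α * δ ^ α / 4 := by
            rw [mul_pow, hεv2]
            ring
          rw [h2εv, div_mul_div_comm,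
            show ε * α * δ ^ α * δ ^ (-α) = ε * α * (δ ^ α * δ ^ (-α)) by ring, hone, mul_one,
            show ε * α = α * ε by ring, show (4:ℝ) * α = α * 4 by ring,
            mul_div_mul_left _ _ hα0.ne']
  -- assemble
  have hFnn : 0 ≤ ∫ τ in Set.Ioo (0:ℝ) t, f τ :=
    setIntegral_nonneg measurableSet_Ioo
      (fun τ hτ => div_nonneg (by positivity)
        (Real.rpow_pos_of_pos (by linarith [hτ.2] : (0:ℝ) < t - τ) _).le)
  have : dist (∫ τ in Set.Ioo (0:ℝ) t, f τ) 0 < ε := by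
    rw [dist_zero_right, Real.norm_eq_abs, abs_of_nonneg hFnn]
    rw [hIeq]
    linarith
  exact this
end

section
/- Let α ∈ (0,1) and c_j = −(1/2)(2-α)((j+1)^{1-α} + j^{1-α}) + (j+1)^{2-α} − j^{2-α} for j ≥ 1. Then c_j is positive and decreasing in j: c_j ≥ c_{j+1} > 0 for all j ≥ 1. -/
open Set MeasureTheory intervalIntegral

/-- integral of the affine interpolation over `[x, x+1]` is the trapezoid value. -/
lemma integral_affine_trap (x A B : ℝ) :
    ∫ t in x..x+1, ((x+1-t)*A + (t-x)*B) = (A+B)/2 := by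
  have h1 : ∀ t : ℝ, (x+1-t)*A + (t-x)*B = ((x+1)*A - x*B) + (B-A)*t := by
    intro t; ring
  simp only [h1]
  rw [intervalIntegral.integral_add intervalIntegrable_const
      (Continuous.intervalIntegrable (by continuity) _ _),
    intervalIntegral.integral_const, intervalIntegral.integral_const_mul, integral_id]
  simp [smul_eq_mul]
  ring

lemma convexOn_rpow_neg {q : ℝ} (hq : q < 0) :
    ConvexOn ℝ (Ioi (0:ℝ)) fun t : ℝ => t ^ q := by
  apply convexOn_of_hasDerivWithinAt2_nonneg (convex_Ioi 0)
    (f' := fun t => q * t ^ (q-1)) (f'' := fun t => q * ((q-1) * t ^ (q-2)))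
  · intro t ht
    exact (Real.continuousAt_rpow_const t q (Or.inl (ne_of_gt ht))).continuousWithinAt
  · rw [interior_Ioi]
    intro t ht
    exact (Real.hasDerivAt_rpow_const (Or.inl (ne_of_gt ht))).hasDerivWithinAt
  · rw [interior_Ioi]
    intro t ht
    have h := ((Real.hasDerivAt_rpow_const (p := q - 1)
      (Or.inl (ne_of_gt ht))).const_mul q).hasDerivWithinAt
      (s := Ioi (0:ℝ))
    rwa [show q - 1 - 1 = q - 2 by ring] at h
  · rw [interior_Ioi]
    intro t ht
    have h2 : (0:ℝ) ≤ t ^ (q-2) := Real.rpow_nonneg (le_of_lt ht) _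
    calc (0:ℝ) ≤ (-q) * (-(q-1) * t ^ (q-2)) :=
          mul_nonneg (by linarith) (mul_nonneg (by linarith) h2)
      _ = q * ((q-1) * t ^ (q-2)) := by ring

/-- Trapezoid rule overestimates integral of convex `t^q`. -/
lemma trap_convex {q x : ℝ} (hq0 : -1 < q) (hq1 : q < 0) (hx : (1:ℝ) ≤ x) :
    ((x+1)^(q+1) - x^(q+1))/(q+1) ≤ (x^q + (x+1)^q)/2 := by
  have hx0 : (0:ℝ) < x := by linarith
  have key : (∫ t in x..x+1, t ^ q) ≤
      ∫ t in x..x+1, ((x+1-t)*x^q + (t-x)*(x+1)^q) := by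
    apply intervalIntegral.integral_mono_on (by linarith)
    · apply ContinuousOn.intervalIntegrable
      intro t ht
      rw [uIcc_of_le (by linarith)] at ht
      exact (Real.continuousAt_rpow_const t q
        (Or.inl (by nlinarith [ht.1] : t ≠ 0))).continuousWithinAt
    · exact Continuous.intervalIntegrable (by continuity) _ _
    · intro t ht
      have h2 := (convexOn_rpow_neg hq1).2 (mem_Ioi.mpr hx0)
        (mem_Ioi.mpr (by linarith : (0:ℝ) < x+1))
        (by linarith [ht.2] : 0 ≤ x+1-t) (by linarith [ht.1] : 0 ≤ t-x)
        (by ring : (x+1-t) + (t-x) = 1)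
      simp only [smul_eq_mul] at h2
      rwa [show (x+1-t)*x + (t-x)*(x+1) = t by ring] at h2
  rwa [integral_rpow (Or.inl hq0), integral_affine_trap] at key

/-- Trapezoid rule strictly underestimates integral of strictly concave `t^p`. -/
lemma trap_concave {p x : ℝ} (hp0 : 0 < p) (hp1 : p < 1) (hx : (1:ℝ) ≤ x) :
    (x^p + (x+1)^p)/2 < ((x+1)^(p+1) - x^(p+1))/(p+1) := by
  have hconc := Real.strictConcaveOn_rpow hp0 hp1
  have key : (∫ t in x..x+1, ((x+1-t)*x^p + (t-x)*(x+1)^p)) < ∫ t in x..x+1, t ^ p := by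
    apply intervalIntegral.integral_lt_integral_of_continuousOn_of_le_of_exists_lt
      (by linarith : x < x + 1)
    · exact Continuous.continuousOn (by continuity)
    · intro t ht
      exact (Real.continuousAt_rpow_const t p
        (Or.inl (by nlinarith [ht.1] : t ≠ 0))).continuousWithinAt
    · intro t ht
      have h2 := hconc.concaveOn.2 (mem_Ici.mpr (by linarith : (0:ℝ) ≤ x))
        (mem_Ici.mpr (by linarith : (0:ℝ) ≤ x+1))
        (by linarith [ht.2] : 0 ≤ x+1-t) (by linarith [ht.1] : 0 ≤ t-x)
        (by ring : (x+1-t) + (t-x) = 1)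
      simp only [smul_eq_mul] at h2
      rwa [show (x+1-t)*x + (t-x)*(x+1) = t by ring] at h2
    · refine ⟨x + 1/2, ⟨by linarith, by linarith⟩, ?_⟩
      have h2 := hconc.2 (mem_Ici.mpr (by linarith : (0:ℝ) ≤ x))
        (mem_Ici.mpr (by linarith : (0:ℝ) ≤ x+1))
        (by linarith : x ≠ x+1) (by norm_num : (0:ℝ) < 1/2) (by norm_num : (0:ℝ) < 1/2)
        (by norm_num)
      simp only [smul_eq_mul] at h2
      rw [show (1/2:ℝ)*x + (1/2)*(x+1) = x + 1/2 by ring] at h2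
      calc (x+1-(x+1/2))*x^p + (x+1/2-x)*(x+1)^p
          = 1/2*x^p + 1/2*(x+1)^p := by ring_nf
        _ < (x+1/2)^p := h2
  rwa [integral_rpow (Or.inl (by linarith : (-1:ℝ) < p)), integral_affine_trap] at key

lemma C_antitone {α : ℝ} (h0 : 0 < α) (h1 : α < 1) :
    AntitoneOn (fun x : ℝ => -(1/2) * (2-α) * ((x+1) ^ (1-α) + x ^ (1-α))
        + (x+1) ^ (2-α) - x ^ (2-α)) (Ici (1:ℝ)) := by
  have hcont : ∀ r : ℝ, ContinuousOn (fun x : ℝ => x ^ r) (Ici (1:ℝ)) := by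
    intro r x hx
    exact (Real.continuousAt_rpow_const x r
      (Or.inl (by simp only [mem_Ici] at hx; nlinarith : x ≠ 0))).continuousWithinAt
  have hcont' : ∀ r : ℝ, ContinuousOn (fun x : ℝ => (x+1) ^ r) (Ici (1:ℝ)) := by
    intro r
    exact (hcont r).comp (continuous_id.add continuous_const).continuousOn
      (fun x hx => by simp only [mem_Ici] at *; linarith)
  apply antitoneOn_of_hasDerivWithinAt_nonpos (convex_Ici 1)
    (f' := fun x => -(1/2) * (2-α) * ((1-α) * (x+1) ^ (1-α-1) * 1 + (1-α) * x ^ (1-α-1))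
        + (2-α) * (x+1) ^ (2-α-1) * 1 - (2-α) * x ^ (2-α-1))
  · exact ((continuousOn_const.mul ((hcont' (1-α)).add (hcont (1-α)))).add
      (hcont' (2-α))).sub (hcont (2-α))
  · rw [interior_Ici]
    intro x hx
    have hx1 : (1:ℝ) < x := hx
    have hxne : x ≠ 0 := by linarith
    have hxne' : x + 1 ≠ 0 := by linarith
    have d1 : HasDerivAt (fun x : ℝ => (x+1) ^ (1-α)) ((1-α) * (x+1) ^ (1-α-1) * 1) x :=
      by have := (Real.hasDerivAt_rpow_const (p := 1-α) (Or.inl hxne')).comp x ((hasDerivAt_id x).add_const 1); exact this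
    have d2 : HasDerivAt (fun x : ℝ => x ^ (1-α)) ((1-α) * x ^ (1-α-1)) x :=
      Real.hasDerivAt_rpow_const (Or.inl hxne)
    have d3 : HasDerivAt (fun x : ℝ => (x+1) ^ (2-α)) ((2-α) * (x+1) ^ (2-α-1) * 1) x :=
      by have := (Real.hasDerivAt_rpow_const (p := 2-α) (Or.inl hxne')).comp x ((hasDerivAt_id x).add_const 1); exact this
    have d4 : HasDerivAt (fun x : ℝ => x ^ (2-α)) ((2-α) * x ^ (2-α-1)) x :=
      Real.hasDerivAt_rpow_const (Or.inl hxne)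
    exact ((((d1.add d2).const_mul (-(1/2) * (2-α))).add d3).sub d4).hasDerivWithinAt
  · rw [interior_Ici]
    intro x hx
    have hx1 : (1:ℝ) ≤ x := le_of_lt hx
    have hq := trap_convex (q := -α) (x := x) (by linarith) (by linarith) hx1
    rw [show -α + 1 = 1 - α by ring] at hq
    have h1α : (0:ℝ) < 1 - α := by linarith
    rw [div_le_div_iff₀ h1α (by norm_num : (0:ℝ) < 2)] at hq
    -- hq : ((x+1)^(1-α) - x^(1-α)) * 2 ≤ (x^(-α) + (x+1)^(-α)) * (1-α)
    rw [show (1:ℝ) - α - 1 = -α by ring, show (2:ℝ) - α - 1 = 1 - α by ring]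
    nlinarith [hq, Real.rpow_nonneg (by linarith : (0:ℝ) ≤ x) (-α),
      Real.rpow_nonneg (by linarith : (0:ℝ) ≤ x+1) (-α)]

theorem L2_c_coefficients_positive_decreasing
    (α : ℝ) (hα : α ∈ Set.Ioo (0:ℝ) 1) (c : ℕ → ℝ)
    (hc : ∀ j : ℕ, 1 ≤ j → c j = -(1/2) * (2-α) * (((j:ℝ)+1) ^ (1-α) + (j:ℝ) ^ (1-α))
        + ((j:ℝ)+1) ^ (2-α) - (j:ℝ) ^ (2-α)) :
    ∀ j : ℕ, 1 ≤ j → c j ≥ c (j+1) ∧ c (j+1) > 0 := by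
  obtain ⟨h0, h1⟩ := hα
  intro j hj
  have hj1 : (1:ℝ) ≤ (j:ℝ) := by exact_mod_cast hj
  have hcj : c j = -(1/2) * (2-α) * (((j:ℝ)+1) ^ (1-α) + (j:ℝ) ^ (1-α))
      + ((j:ℝ)+1) ^ (2-α) - (j:ℝ) ^ (2-α) := hc j hj
  have hcj1 : c (j+1) = -(1/2) * (2-α) * ((((j:ℝ)+1)+1) ^ (1-α) + ((j:ℝ)+1) ^ (1-α))
      + (((j:ℝ)+1)+1) ^ (2-α) - ((j:ℝ)+1) ^ (2-α) := by
    have := hc (j+1) (by omega)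
    push_cast at this
    convert this using 3 <;> push_cast <;> ring_nf
  constructor
  · have := C_antitone h0 h1 (mem_Ici.mpr hj1) (mem_Ici.mpr (by linarith : (1:ℝ) ≤ (j:ℝ)+1))
      (by linarith : (j:ℝ) ≤ (j:ℝ)+1)
    simp only [] at this
    rw [hcj, hcj1]
    exact this
  · have hp := trap_concave (p := 1-α) (x := (j:ℝ)+1) (by linarith) (by linarith)
      (by linarith)
    rw [show (1:ℝ) - α + 1 = 2 - α by ring] at hp
    have h2α : (0:ℝ) < 2 - α := by linarith
    rw [div_lt_div_iff₀ (by norm_num : (0:ℝ) < 2) h2α] at hp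
    rw [hcj1]
    nlinarith [hp]
end

section
/- Let α ∈ (0,1) and r₁ = 2 + α/2 − (α/2 + 1)·2^{1-α}. Then r₁ > 0. -/
theorem r1_positive (α : ℝ) (hα : α ∈ Set.Ioo (0:ℝ) 1) :
    0 < 2 + α/2 - (α/2 + 1) * (2:ℝ) ^ (1-α) := by
  obtain ⟨h0, h1⟩ := hα
  set L := Real.log 2 with hL
  have hLb : (0.6931471803 : ℝ) < L := Real.log_two_gt_d9
  have hx : (0:ℝ) < (2:ℝ) ^ (1-α) := Real.rpow_pos_of_pos (by norm_num) _
  have hprod : (2:ℝ) ^ (1-α) * (2:ℝ) ^ α = 2 := by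
    rw [← Real.rpow_add (by norm_num)]
    norm_num
  have hexp : (2:ℝ) ^ α = Real.exp (α * L) := by
    rw [Real.rpow_def_of_pos (by norm_num)]
    ring_nf
    rw [hL, mul_comm]
  have hgt : 1 + α * L < (2:ℝ) ^ α := by
    rw [hexp]
    have := Real.add_one_lt_exp (x := α * L) (by positivity)
    linarith
  have key : (2:ℝ) ^ (1-α) * (1 + α * L) < 2 := by
    calc (2:ℝ) ^ (1-α) * (1 + α * L) < (2:ℝ) ^ (1-α) * (2:ℝ) ^ α :=
          by exact mul_lt_mul_of_pos_left hgt hx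
      _ = 2 := hprod
  nlinarith [mul_pos hx h0, mul_pos (mul_pos hx h0) h0, mul_pos h0 h0,
    mul_lt_mul_of_pos_left key h0]
end
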